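/- Let 0 < α < 1, L = 2π, a = (2π)^(-α)·E_{2,1-α}(-4π²), b = (2π)^(1-α)·E_{2,2-α}(-4π²), and A the 2×2 matrix [[a, -b], [b, a]]. Then for any c ∈ ℝ, the vector function X(t) = c·(cos t, sin t) satisfies the fractional autonomous system D^α_{2π} X(t) = A·X(t) componentwise, and X is a non-constant (for c ≠ 0) 2π-periodic solution. -/

import Mathlib

open Real Matrix

open Filter Topology

noncomputable def Dfml (α L : ℝ) (f : ℝ → ℝ) (t : ℝ) : ℝ :=
  f (t - L) * L ^ (-α) / Real.Gamma (1 - α)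
  + deriv f (t - L) * L ^ (1 - α) / Real.Gamma (2 - α)
  + (1 / Real.Gamma (2 - α)) * ∫ τ in (t - L)..t, (t - τ) ^ (1 - α) * deriv (deriv f) τ

noncomputable def mittagLeffler (a b z : ℝ) : ℝ := ∑' k : ℕ, z ^ k / Real.Gamma (a * k + b)

noncomputable def Jc (p : ℝ) : ℝ := ∫ s in (0:ℝ)..(2*π), s ^ p * Real.cos s
noncomputable def Ks (p : ℝ) : ℝ := ∫ s in (0:ℝ)..(2*π), s ^ p * Real.sin s

lemma cont_rpow {p : ℝ} (hp : 0 ≤ p) : Continuous fun s : ℝ => s ^ p := by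
  rw [continuous_iff_continuousAt]
  exact fun x => Real.continuousAt_rpow_const x p (Or.inr hp)

lemma intable_cos {p : ℝ} (hp : 0 ≤ p) (a b : ℝ) :
    IntervalIntegrable (fun s : ℝ => s ^ p * Real.cos s) MeasureTheory.volume a b :=
  ((cont_rpow hp).mul Real.continuous_cos).intervalIntegrable a b

lemma intable_sin {p : ℝ} (hp : 0 ≤ p) (a b : ℝ) :
    IntervalIntegrable (fun s : ℝ => s ^ p * Real.sin s) MeasureTheory.volume a b :=
  ((cont_rpow hp).mul Real.continuous_sin).intervalIntegrable a b

lemma lemA {p : ℝ} (hp : 0 < p) : Jc (p+1) = -((p+1) * Ks p) := by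
  have key : ∫ s in (0:ℝ)..(2*π), ((p+1) * s ^ p * Real.sin s + s ^ (p+1) * Real.cos s)
      = (fun s : ℝ => s ^ (p+1) * Real.sin s) (2*π) - (fun s : ℝ => s ^ (p+1) * Real.sin s) 0 := by
    apply intervalIntegral.integral_eq_sub_of_hasDerivAt
        (f := fun s : ℝ => s ^ (p+1) * Real.sin s)
    · intro x _
      have h1 : HasDerivAt (fun s : ℝ => s ^ (p+1)) ((p+1) * x ^ p) x := by
        have := Real.hasDerivAt_rpow_const (x := x) (p := p+1) (Or.inr (by linarith))
        simpa using this
      have := h1.mul (Real.hasDerivAt_sin x)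
      exact this
    · apply IntervalIntegrable.add
      · exact ((continuous_const.mul (cont_rpow hp.le)).mul Real.continuous_sin).intervalIntegrable _ _
      · exact intable_cos (by linarith) _ _
  rw [intervalIntegral.integral_add (f := fun s => (p+1) * s ^ p * Real.sin s)
      (((continuous_const.mul (cont_rpow hp.le)).mul Real.continuous_sin).intervalIntegrable _ _)
      (intable_cos (by linarith : (0:ℝ) ≤ p+1) _ _)] at key
  have h2 : ∫ s in (0:ℝ)..(2*π), (p+1) * s ^ p * Real.sin s = (p+1) * Ks p := by
    rw [Ks, ← intervalIntegral.integral_const_mul]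
    congr 1; ext s; ring
  rw [h2] at key
  simp only [Real.sin_two_pi, Real.sin_zero, mul_zero, sub_zero] at key
  rw [Jc]; linarith

lemma lemB {p : ℝ} (hp : 0 < p) : Ks (p+1) = (p+1) * Jc p - (2*π) ^ (p+1) := by
  have key : ∫ s in (0:ℝ)..(2*π), ((p+1) * s ^ p * Real.cos s + s ^ (p+1) * -Real.sin s)
      = (fun s : ℝ => s ^ (p+1) * Real.cos s) (2*π) - (fun s : ℝ => s ^ (p+1) * Real.cos s) 0 := by
    apply intervalIntegral.integral_eq_sub_of_hasDerivAt
        (f := fun s : ℝ => s ^ (p+1) * Real.cos s)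
    · intro x _
      have h1 : HasDerivAt (fun s : ℝ => s ^ (p+1)) ((p+1) * x ^ p) x := by
        have := Real.hasDerivAt_rpow_const (x := x) (p := p+1) (Or.inr (by linarith))
        simpa using this
      have := h1.mul (Real.hasDerivAt_cos x)
      exact this
    · apply IntervalIntegrable.add
      · exact ((continuous_const.mul (cont_rpow hp.le)).mul Real.continuous_cos).intervalIntegrable _ _
      · exact ((cont_rpow (by linarith : (0:ℝ) ≤ p+1)).mul Real.continuous_sin.neg).intervalIntegrable _ _
  rw [intervalIntegral.integral_add (f := fun s => (p+1) * s ^ p * Real.cos s)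
      (g := fun s => s ^ (p+1) * -Real.sin s)
      (((continuous_const.mul (cont_rpow hp.le)).mul Real.continuous_cos).intervalIntegrable _ _)
      (((cont_rpow (by linarith : (0:ℝ) ≤ p+1)).mul Real.continuous_sin.neg).intervalIntegrable _ _)] at key
  have h2 : ∫ s in (0:ℝ)..(2*π), (p+1) * s ^ p * Real.cos s = (p+1) * Jc p := by
    rw [Jc, ← intervalIntegral.integral_const_mul]
    congr 1; ext s; ring
  have h3 : ∫ s in (0:ℝ)..(2*π), s ^ (p+1) * -Real.sin s = -Ks (p+1) := by
    rw [Ks, ← intervalIntegral.integral_neg]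
    congr 1; ext s; ring
  rw [h2, h3] at key
  simp only [Real.cos_two_pi, Real.cos_zero, mul_one] at key
  rw [Real.zero_rpow (by positivity : p + 1 ≠ 0)] at key
  linarith

lemma Gamma_rec2 {x : ℝ} (hx : 0 < x) :
    Real.Gamma (x+2) = (x+1) * x * Real.Gamma x := by
  have h1 : Real.Gamma (x+1) = x * Real.Gamma x := Real.Gamma_add_one hx.ne'
  have h2 : Real.Gamma (x+1+1) = (x+1) * Real.Gamma (x+1) := Real.Gamma_add_one (by linarith)
  rw [show x+2 = x+1+1 by ring, h2, h1]; ring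

section
variable {α : ℝ} (hα0 : 0 < α) (hα1 : α < 1)

lemma recJ (hα1 : α < 1) (n : ℕ) :
    Jc (2*(n:ℝ)+3-α)
      = -((2*(n:ℝ)+3-α) * ((2*(n:ℝ)+2-α) * Jc (2*(n:ℝ)+1-α) - (2*π) ^ (2*(n:ℝ)+2-α))) := by
  have hn : (0:ℝ) ≤ n := n.cast_nonneg
  have hB := lemB (p := 2*(n:ℝ)+1-α) (by linarith)
  have hA := lemA (p := 2*(n:ℝ)+2-α) (by linarith)
  rw [show 2*(n:ℝ)+1-α+1 = 2*(n:ℝ)+2-α by ring] at hB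
  rw [show 2*(n:ℝ)+2-α+1 = 2*(n:ℝ)+3-α by ring] at hA
  rw [hA, hB]

lemma recK (hα1 : α < 1) (n : ℕ) :
    Ks (2*(n:ℝ)+3-α)
      = -((2*(n:ℝ)+3-α) * (2*(n:ℝ)+2-α) * Ks (2*(n:ℝ)+1-α)) - (2*π) ^ (2*(n:ℝ)+3-α) := by
  have hn : (0:ℝ) ≤ n := n.cast_nonneg
  have hA := lemA (p := 2*(n:ℝ)+1-α) (by linarith)
  have hB := lemB (p := 2*(n:ℝ)+2-α) (by linarith)
  rw [show 2*(n:ℝ)+1-α+1 = 2*(n:ℝ)+2-α by ring] at hA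
  rw [show 2*(n:ℝ)+2-α+1 = 2*(n:ℝ)+3-α by ring] at hB
  rw [hB, hA]; ring

lemma IA (hα0 : 0 < α) (hα1 : α < 1) (n : ℕ) :
    ∑ k ∈ Finset.range (n+1), (-(4*π^2))^k / Real.Gamma (2*(k:ℝ) + (1-α))
      = (1/Real.Gamma (1-α) - (2*π)^(α:ℝ) * Jc (1-α) / Real.Gamma (2-α))
        + (-1)^n * (2*π)^(α:ℝ) * Jc (2*(n:ℝ)+1-α) / Real.Gamma (2*(n:ℝ)+2-α) := by
  induction n with
  | zero => norm_num
  | succ n ih =>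
    have hn : (0:ℝ) ≤ n := n.cast_nonneg
    rw [Finset.sum_range_succ, ih]
    have hG3 : Real.Gamma (2*((n:ℝ)+1) + (1-α)) = (2*(n:ℝ)+2-α) * Real.Gamma (2*(n:ℝ)+2-α) := by
      rw [show 2*((n:ℝ)+1) + (1-α) = (2*(n:ℝ)+2-α) + 1 by ring]
      exact Real.Gamma_add_one (by linarith)
    have hG4 : Real.Gamma (2*((n:ℝ)+1)+2-α)
        = (2*(n:ℝ)+3-α) * (2*(n:ℝ)+2-α) * Real.Gamma (2*(n:ℝ)+2-α) := by
      rw [show 2*((n:ℝ)+1)+2-α = (2*(n:ℝ)+2-α) + 2 by ring]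
      rw [Gamma_rec2 (by linarith)]; ring
    have hrec := recJ hα1 n
    have hpow : (-(4*π^2) : ℝ)^(n+1) = -((-1)^n * (2*π) ^ ((2*(n:ℝ)+2) : ℝ)) := by
      rw [show ((2*(n:ℝ)+2) : ℝ) = ((2*n+2 : ℕ) : ℝ) by push_cast; ring, Real.rpow_natCast]
      rw [show (-(4*π^2) : ℝ) = (-1) * (2*π)^2 by ring, mul_pow, ← pow_mul]
      rw [pow_succ]
      ring_nf
    have hsplit : (2*π : ℝ) ^ ((2*(n:ℝ)+2) : ℝ) = (2*π)^(α:ℝ) * (2*π) ^ (2*(n:ℝ)+2-α) := by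
      rw [← Real.rpow_add (by positivity)]; norm_num
    have hGpos : 0 < Real.Gamma (2*(n:ℝ)+2-α) := Real.Gamma_pos_of_pos (by linarith)
    push_cast
    rw [show 2*((n:ℝ)+1)+1-α = 2*(n:ℝ)+3-α by ring, hrec, hG3, hG4,
      show ((-(4*π^2) : ℝ)^(n+1) : ℝ) = -((-1)^n * ((2*π)^(α:ℝ) * (2*π) ^ (2*(n:ℝ)+2-α))) by
        rw [hpow, hsplit]]
    have h1 : (2*(n:ℝ)+2-α) ≠ 0 := by linarith
    have h2 : (2*(n:ℝ)+3-α) ≠ 0 := by linarith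
    have hGne : Real.Gamma (2*(n:ℝ)+2-α) ≠ 0 := hGpos.ne'
    have hG1ne : Real.Gamma (1-α) ≠ 0 := (Real.Gamma_pos_of_pos (by linarith)).ne'
    have hG2ne : Real.Gamma (2-α) ≠ 0 := (Real.Gamma_pos_of_pos (by linarith)).ne'
    set G := Real.Gamma (2*(n:ℝ)+2-α) with hGdef
    set d2 := (2*(n:ℝ)+2-α) with hd2
    set d3 := (2*(n:ℝ)+3-α) with hd3
    field_simp
    ring
end

section
variable {α : ℝ}

lemma IB (hα0 : 0 < α) (hα1 : α < 1) (n : ℕ) :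
    ∑ k ∈ Finset.range (n+1), (-(4*π^2))^k / Real.Gamma (2*(k:ℝ) + (2-α))
      = (1/Real.Gamma (2-α) + (2*π)^(α-1 : ℝ) * Ks (1-α) / Real.Gamma (2-α))
        - (-1)^n * (2*π)^(α-1 : ℝ) * Ks (2*(n:ℝ)+1-α) / Real.Gamma (2*(n:ℝ)+2-α) := by
  induction n with
  | zero => norm_num
  | succ n ih =>
    have hn : (0:ℝ) ≤ n := n.cast_nonneg
    rw [Finset.sum_range_succ, ih]
    have hG4 : Real.Gamma (2*((n:ℝ)+1)+(2-α))
        = (2*(n:ℝ)+3-α) * (2*(n:ℝ)+2-α) * Real.Gamma (2*(n:ℝ)+2-α) := by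
      rw [show 2*((n:ℝ)+1)+(2-α) = (2*(n:ℝ)+2-α) + 2 by ring]
      rw [Gamma_rec2 (by linarith)]; ring
    have hrec := recK hα1 n
    have hpow : (-(4*π^2) : ℝ)^(n+1) = -((-1)^n * (2*π) ^ ((2*(n:ℝ)+2) : ℝ)) := by
      rw [show ((2*(n:ℝ)+2) : ℝ) = ((2*n+2 : ℕ) : ℝ) by push_cast; ring, Real.rpow_natCast]
      rw [show (-(4*π^2) : ℝ) = (-1) * (2*π)^2 by ring, mul_pow, ← pow_mul]
      rw [pow_succ]; ring_nf
    have hsplit : (2*π : ℝ) ^ ((2*(n:ℝ)+2) : ℝ) = (2*π)^(α-1 : ℝ) * (2*π) ^ (2*(n:ℝ)+3-α) := by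
      rw [← Real.rpow_add (by positivity)]; congr 1; ring
    have hGpos : 0 < Real.Gamma (2*(n:ℝ)+2-α) := Real.Gamma_pos_of_pos (by linarith)
    push_cast
    rw [show 2*((n:ℝ)+1)+1-α = 2*(n:ℝ)+3-α by ring,
        show 2*((n:ℝ)+1)+2-α = 2*((n:ℝ)+1)+(2-α) by ring, hG4, hrec, hpow, hsplit]
    have h1 : (2*(n:ℝ)+2-α) ≠ 0 := by linarith
    have h2 : (2*(n:ℝ)+3-α) ≠ 0 := by linarith
    have hGne : Real.Gamma (2*(n:ℝ)+2-α) ≠ 0 := hGpos.ne'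
    have hG1ne : Real.Gamma (1-α) ≠ 0 := (Real.Gamma_pos_of_pos (by linarith)).ne'
    have hG2ne : Real.Gamma (2-α) ≠ 0 := (Real.Gamma_pos_of_pos (by linarith)).ne'
    set G := Real.Gamma (2*(n:ℝ)+2-α) with hGdef
    set d2 := (2*(n:ℝ)+2-α) with hd2
    set d3 := (2*(n:ℝ)+3-α) with hd3
    field_simp
    ring
end

lemma Jc_bound {p : ℝ} (hp : 0 ≤ p) : |Jc p| ≤ (2*π) ^ p * (2*π) := by
  have h : ∀ x ∈ Set.uIoc (0:ℝ) (2*π), ‖x ^ p * Real.cos x‖ ≤ (2*π) ^ p := by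
    intro x hx
    rw [Set.uIoc_of_le (by positivity)] at hx
    have hx0 : 0 < x := hx.1
    have hxL : x ≤ 2*π := hx.2
    calc ‖x ^ p * Real.cos x‖ = |x ^ p| * |Real.cos x| := abs_mul _ _
      _ ≤ (2*π) ^ p * 1 := by
          apply mul_le_mul _ (Real.abs_cos_le_one x) (abs_nonneg _) (by positivity)
          rw [abs_of_nonneg (Real.rpow_nonneg hx0.le p)]
          exact Real.rpow_le_rpow hx0.le hxL hp
      _ = (2*π) ^ p := mul_one _
  have := intervalIntegral.norm_integral_le_of_norm_le_const h
  simpa [Jc, abs_of_nonneg Real.pi_nonneg, abs_of_nonneg (by positivity : (0:ℝ) ≤ 2*π)] using this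

lemma Ks_bound {p : ℝ} (hp : 0 ≤ p) : |Ks p| ≤ (2*π) ^ p * (2*π) := by
  have h : ∀ x ∈ Set.uIoc (0:ℝ) (2*π), ‖x ^ p * Real.sin x‖ ≤ (2*π) ^ p := by
    intro x hx
    rw [Set.uIoc_of_le (by positivity)] at hx
    have hx0 : 0 < x := hx.1
    have hxL : x ≤ 2*π := hx.2
    calc ‖x ^ p * Real.sin x‖ = |x ^ p| * |Real.sin x| := abs_mul _ _
      _ ≤ (2*π) ^ p * 1 := by
          apply mul_le_mul _ (Real.abs_sin_le_one x) (abs_nonneg _) (by positivity)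
          rw [abs_of_nonneg (Real.rpow_nonneg hx0.le p)]
          exact Real.rpow_le_rpow hx0.le hxL hp
      _ = (2*π) ^ p := mul_one _
  have := intervalIntegral.norm_integral_le_of_norm_le_const h
  simpa [Ks, abs_of_nonneg (by positivity : (0:ℝ) ≤ 2*π)] using this

section
variable {α : ℝ}

lemma u_summable (hα0 : 0 < α) (hα1 : α < 1) :
    Summable (fun n : ℕ => (2*π) ^ (2*(n:ℝ)+1-α) / Real.Gamma (2*(n:ℝ)+2-α)) := by
  apply summable_of_ratio_norm_eventually_le (r := 1/2) (by norm_num)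
  filter_upwards [eventually_ge_atTop 8] with n hn
  have hn' : (8:ℝ) ≤ n := by exact_mod_cast hn
  have hGpos : 0 < Real.Gamma (2*(n:ℝ)+2-α) := Real.Gamma_pos_of_pos (by linarith)
  have hG4 : Real.Gamma (2*((n:ℝ)+1)+2-α)
      = (2*(n:ℝ)+3-α) * (2*(n:ℝ)+2-α) * Real.Gamma (2*(n:ℝ)+2-α) := by
    rw [show 2*((n:ℝ)+1)+2-α = (2*(n:ℝ)+2-α) + 2 by ring, Gamma_rec2 (by linarith)]; ring
  have hsplit : (2*π : ℝ) ^ (2*((n:ℝ)+1)+1-α) = (2*π) ^ (2*(n:ℝ)+1-α) * (2*π)^(2:ℝ) := by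
    rw [← Real.rpow_add (by positivity)]; congr 1; ring
  have hpi : π ≤ 4 := Real.pi_le_four
  have hpi0 : 0 < π := Real.pi_pos
  have hL2 : (2*π : ℝ)^(2:ℝ) ≤ 64 := by
    rw [show (2*π : ℝ)^(2:ℝ) = (2*π)^(2:ℕ) by rw [← Real.rpow_natCast]; norm_num]
    nlinarith
  have h1 : 0 < (2*π : ℝ) ^ (2*(n:ℝ)+1-α) := Real.rpow_pos_of_pos (by positivity) _
  have h2 : 0 < (2*π : ℝ)^(2:ℝ) := Real.rpow_pos_of_pos (by positivity) _
  have hd : 0 < (2*(n:ℝ)+3-α) * (2*(n:ℝ)+2-α) := by nlinarith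
  have hG4pos : 0 < Real.Gamma (2*((n:ℝ)+1)+2-α) := by rw [hG4]; positivity
  have key : (2*π : ℝ)^(2*((n:ℝ)+1)+1-α) / Real.Gamma (2*((n:ℝ)+1)+2-α)
      = ((2*π)^(2*(n:ℝ)+1-α) / Real.Gamma (2*(n:ℝ)+2-α))
        * ((2*π)^(2:ℝ) / ((2*(n:ℝ)+3-α)*(2*(n:ℝ)+2-α))) := by
    rw [hsplit, hG4]
    field_simp
  have hfrac : (2*π : ℝ)^(2:ℝ) / ((2*(n:ℝ)+3-α)*(2*(n:ℝ)+2-α)) ≤ 1/2 := by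
    rw [div_le_iff₀ hd]
    nlinarith
  push_cast
  rw [Real.norm_eq_abs, Real.norm_eq_abs,
    abs_of_nonneg (div_nonneg (Real.rpow_nonneg (by positivity) _) hG4pos.le),
    abs_of_nonneg (div_nonneg h1.le hGpos.le), key]
  have hu : 0 ≤ (2*π : ℝ)^(2*(n:ℝ)+1-α) / Real.Gamma (2*(n:ℝ)+2-α) := div_nonneg h1.le hGpos.le
  calc ((2*π : ℝ)^(2*(n:ℝ)+1-α) / Real.Gamma (2*(n:ℝ)+2-α))
        * ((2*π)^(2:ℝ) / ((2*(n:ℝ)+3-α)*(2*(n:ℝ)+2-α)))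
      ≤ ((2*π : ℝ)^(2*(n:ℝ)+1-α) / Real.Gamma (2*(n:ℝ)+2-α)) * (1/2) :=
        mul_le_mul_of_nonneg_left hfrac hu
    _ = 1/2 * ((2*π : ℝ)^(2*(n:ℝ)+1-α) / Real.Gamma (2*(n:ℝ)+2-α)) := by ring

end

lemma ml_summable (b : ℝ) (hb : 0 < b) :
    Summable (fun k : ℕ => (-(4*π^2))^k / Real.Gamma (2*(k:ℝ) + b)) := by
  apply summable_of_ratio_norm_eventually_le (r := 1/2) (by norm_num)
  filter_upwards [eventually_ge_atTop 8] with n hn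
  have hn' : (8:ℝ) ≤ n := by exact_mod_cast hn
  have hpi : π ≤ 4 := Real.pi_le_four
  have hpi0 : 0 < π := Real.pi_pos
  have hGpos : 0 < Real.Gamma (2*(n:ℝ) + b) := Real.Gamma_pos_of_pos (by linarith)
  have hG4 : Real.Gamma (2*((n:ℝ)+1) + b)
      = (2*(n:ℝ)+b+1) * (2*(n:ℝ)+b) * Real.Gamma (2*(n:ℝ) + b) := by
    rw [show 2*((n:ℝ)+1)+b = (2*(n:ℝ)+b) + 2 by ring, Gamma_rec2 (by linarith)]
  have hf1 : (0:ℝ) < 2*(n:ℝ)+b+1 := by linarith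
  have hf2 : (0:ℝ) < 2*(n:ℝ)+b := by linarith
  have hG4pos : 0 < Real.Gamma (2*((n:ℝ)+1) + b) := by rw [hG4]; positivity
  have habs : ∀ k : ℕ, |(-(4*π^2) : ℝ)^k| = (4*π^2)^k := by
    intro k; rw [abs_pow, abs_neg, abs_of_nonneg (by positivity)]
  have key : ((4*π^2:ℝ))^(n+1) / Real.Gamma (2*((n:ℝ)+1) + b)
      = ((4*π^2)^n / Real.Gamma (2*(n:ℝ)+b)) * ((4*π^2) / ((2*(n:ℝ)+b+1)*(2*(n:ℝ)+b))) := by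
    rw [hG4, pow_succ]
    field_simp
  have hfrac : (4*π^2:ℝ) / ((2*(n:ℝ)+b+1)*(2*(n:ℝ)+b)) ≤ 1/2 := by
    rw [div_le_iff₀ (by positivity)]
    nlinarith
  push_cast
  rw [Real.norm_eq_abs, Real.norm_eq_abs, abs_div, abs_div, habs, habs,
    abs_of_nonneg hG4pos.le, abs_of_nonneg hGpos.le, key]
  have hu : (0:ℝ) ≤ (4*π^2)^n / Real.Gamma (2*(n:ℝ)+b) := by positivity
  calc ((4*π^2:ℝ))^n / Real.Gamma (2*(n:ℝ)+b) * ((4*π^2) / ((2*(n:ℝ)+b+1)*(2*(n:ℝ)+b)))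
      ≤ (4*π^2:ℝ)^n / Real.Gamma (2*(n:ℝ)+b) * (1/2) := mul_le_mul_of_nonneg_left hfrac hu
    _ = 1/2 * ((4*π^2:ℝ)^n / Real.Gamma (2*(n:ℝ)+b)) := by ring

section
variable {α : ℝ}

lemma remJ_tendsto (hα0 : 0 < α) (hα1 : α < 1) :
    Tendsto (fun n : ℕ => (-1)^n * (2*π)^(α:ℝ) * Jc (2*(n:ℝ)+1-α) / Real.Gamma (2*(n:ℝ)+2-α))
      atTop (𝓝 0) := by
  apply squeeze_zero_norm (a := fun n : ℕ =>
    ((2*π)^(α:ℝ) * (2*π)) * ((2*π) ^ (2*(n:ℝ)+1-α) / Real.Gamma (2*(n:ℝ)+2-α)))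
  · intro n
    have hn : (0:ℝ) ≤ n := n.cast_nonneg
    have hGpos : 0 < Real.Gamma (2*(n:ℝ)+2-α) := Real.Gamma_pos_of_pos (by linarith)
    have hb := Jc_bound (p := 2*(n:ℝ)+1-α) (by linarith)
    rw [Real.norm_eq_abs, abs_div, abs_of_nonneg hGpos.le, abs_mul, abs_mul, abs_pow,
      abs_neg, abs_one, one_pow, one_mul, abs_of_nonneg (Real.rpow_nonneg (by positivity) _)]
    rw [div_le_iff₀ hGpos, mul_comm ((2*π:ℝ)^(α:ℝ)*(2*π)) _, div_mul_eq_mul_div,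
      mul_comm ((2*π:ℝ)^(2*(n:ℝ)+1-α)) _]
    calc (2*π:ℝ)^(α:ℝ) * |Jc (2*(n:ℝ)+1-α)|
        ≤ (2*π:ℝ)^(α:ℝ) * ((2*π) ^ (2*(n:ℝ)+1-α) * (2*π)) :=
          mul_le_mul_of_nonneg_left hb (Real.rpow_nonneg (by positivity) _)
      _ = (2*π:ℝ)^(α:ℝ) * (2*π) * (2*π) ^ (2*(n:ℝ)+1-α) := by ring
      _ ≤ (2*π:ℝ)^(α:ℝ) * (2*π) * (2*π) ^ (2*(n:ℝ)+1-α) / Real.Gamma (2*(n:ℝ)+2-α)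
            * Real.Gamma (2*(n:ℝ)+2-α) := by rw [div_mul_cancel₀]; exact hGpos.ne'
  · have h0 := (u_summable hα0 hα1).tendsto_atTop_zero
    have := h0.const_mul ((2*π:ℝ)^(α:ℝ) * (2*π))
    simpa using this

lemma remK_tendsto (hα0 : 0 < α) (hα1 : α < 1) :
    Tendsto (fun n : ℕ => (-1)^n * (2*π)^(α-1:ℝ) * Ks (2*(n:ℝ)+1-α) / Real.Gamma (2*(n:ℝ)+2-α))
      atTop (𝓝 0) := by
  apply squeeze_zero_norm (a := fun n : ℕ =>
    ((2*π)^(α-1:ℝ) * (2*π)) * ((2*π) ^ (2*(n:ℝ)+1-α) / Real.Gamma (2*(n:ℝ)+2-α)))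
  · intro n
    have hn : (0:ℝ) ≤ n := n.cast_nonneg
    have hGpos : 0 < Real.Gamma (2*(n:ℝ)+2-α) := Real.Gamma_pos_of_pos (by linarith)
    have hb := Ks_bound (p := 2*(n:ℝ)+1-α) (by linarith)
    rw [Real.norm_eq_abs, abs_div, abs_of_nonneg hGpos.le, abs_mul, abs_mul, abs_pow,
      abs_neg, abs_one, one_pow, one_mul, abs_of_nonneg (Real.rpow_nonneg (by positivity) _)]
    rw [div_le_iff₀ hGpos, mul_comm ((2*π:ℝ)^(α-1:ℝ)*(2*π)) _, div_mul_eq_mul_div,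
      mul_comm ((2*π:ℝ)^(2*(n:ℝ)+1-α)) _]
    calc (2*π:ℝ)^(α-1:ℝ) * |Ks (2*(n:ℝ)+1-α)|
        ≤ (2*π:ℝ)^(α-1:ℝ) * ((2*π) ^ (2*(n:ℝ)+1-α) * (2*π)) :=
          mul_le_mul_of_nonneg_left hb (Real.rpow_nonneg (by positivity) _)
      _ = (2*π:ℝ)^(α-1:ℝ) * (2*π) * (2*π) ^ (2*(n:ℝ)+1-α) := by ring
      _ ≤ (2*π:ℝ)^(α-1:ℝ) * (2*π) * (2*π) ^ (2*(n:ℝ)+1-α) / Real.Gamma (2*(n:ℝ)+2-α)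
            * Real.Gamma (2*(n:ℝ)+2-α) := by rw [div_mul_cancel₀]; exact hGpos.ne'
  · have h0 := (u_summable hα0 hα1).tendsto_atTop_zero
    have := h0.const_mul ((2*π:ℝ)^(α-1:ℝ) * (2*π))
    simpa using this

lemma tsum_A (hα0 : 0 < α) (hα1 : α < 1) :
    (∑' k : ℕ, (-(4*π^2))^k / Real.Gamma (2*(k:ℝ) + (1-α)))
      = 1/Real.Gamma (1-α) - (2*π)^(α:ℝ) * Jc (1-α) / Real.Gamma (2-α) := by
  have hsum := ml_summable (1-α) (by linarith)
  apply HasSum.tsum_eq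
  rw [hsum.hasSum_iff_tendsto_nat]
  rw [← Filter.tendsto_add_atTop_iff_nat 1]
  have heq : (fun n : ℕ => ∑ k ∈ Finset.range (n+1), (-(4*π^2))^k / Real.Gamma (2*(k:ℝ) + (1-α)))
      = fun n : ℕ => (1/Real.Gamma (1-α) - (2*π)^(α:ℝ) * Jc (1-α) / Real.Gamma (2-α))
        + (-1)^n * (2*π)^(α:ℝ) * Jc (2*(n:ℝ)+1-α) / Real.Gamma (2*(n:ℝ)+2-α) := by
    funext n; exact IA hα0 hα1 n
  rw [heq]
  have := (remJ_tendsto hα0 hα1).const_add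
    (1/Real.Gamma (1-α) - (2*π)^(α:ℝ) * Jc (1-α) / Real.Gamma (2-α))
  simpa using this

lemma tsum_B (hα0 : 0 < α) (hα1 : α < 1) :
    (∑' k : ℕ, (-(4*π^2))^k / Real.Gamma (2*(k:ℝ) + (2-α)))
      = 1/Real.Gamma (2-α) + (2*π)^(α-1:ℝ) * Ks (1-α) / Real.Gamma (2-α) := by
  have hsum := ml_summable (2-α) (by linarith)
  apply HasSum.tsum_eq
  rw [hsum.hasSum_iff_tendsto_nat]
  rw [← Filter.tendsto_add_atTop_iff_nat 1]
  have heq : (fun n : ℕ => ∑ k ∈ Finset.range (n+1), (-(4*π^2))^k / Real.Gamma (2*(k:ℝ) + (2-α)))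
      = fun n : ℕ => (1/Real.Gamma (2-α) + (2*π)^(α-1:ℝ) * Ks (1-α) / Real.Gamma (2-α))
        - (-1)^n * (2*π)^(α-1:ℝ) * Ks (2*(n:ℝ)+1-α) / Real.Gamma (2*(n:ℝ)+2-α) := by
    funext n; exact IB hα0 hα1 n
  rw [heq]
  have h1 : Tendsto (fun n : ℕ =>
      -((-1)^n * (2*π)^(α-1:ℝ) * Ks (2*(n:ℝ)+1-α) / Real.Gamma (2*(n:ℝ)+2-α)))
      atTop (𝓝 0) := by
    have := (remK_tendsto hα0 hα1).neg; simpa using this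
  have := h1.const_add (1/Real.Gamma (2-α) + (2*π)^(α-1:ℝ) * Ks (1-α) / Real.Gamma (2-α))
  simp only [add_zero] at this
  convert this using 2 with n
  ring

end

theorem stmt_7 (α : ℝ) (hα0 : 0 < α) (hα1 : α < 1) (c : ℝ)
    (a b : ℝ)
    (ha : a = (2 * Real.pi) ^ (-α) * mittagLeffler 2 (1 - α) (-(4 * Real.pi ^ 2)))
    (hb : b = (2 * Real.pi) ^ (1 - α) * mittagLeffler 2 (2 - α) (-(4 * Real.pi ^ 2)))
    (X : ℝ → Fin 2 → ℝ) (hX : ∀ t, X t = fun i => if i = 0 then c * Real.cos t else c * Real.sin t)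
    (A : Matrix (Fin 2) (Fin 2) ℝ) (hA : A = !![a, -b; b, a]) :
    (∀ t, Dfml α (2 * Real.pi) (fun s => c * Real.cos s) t = (A.mulVec (X t)) 0)
    ∧ (∀ t, Dfml α (2 * Real.pi) (fun s => c * Real.sin s) t = (A.mulVec (X t)) 1)
    ∧ (∀ t, X (t + 2 * Real.pi) = X t)
    ∧ (c ≠ 0 → ¬ ∀ t s, X t = X s) := by
  have hp1 : (0:ℝ) ≤ 1 - α := by linarith
  -- value of a
  have haval : a = (2*π) ^ (-α) / Real.Gamma (1-α) - Jc (1-α) / Real.Gamma (2-α) := by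
    rw [ha, mittagLeffler]
    rw [show (∑' k : ℕ, (-(4*π^2))^k / Real.Gamma (2*(k:ℝ) + (1-α)))
        = 1/Real.Gamma (1-α) - (2*π)^(α:ℝ) * Jc (1-α) / Real.Gamma (2-α) from tsum_A hα0 hα1]
    have hx : (2*π:ℝ)^(-α) * (2*π)^(α:ℝ) = 1 := by
      rw [← Real.rpow_add (by positivity)]; norm_num
    linear_combination (-(Jc (1-α) / Real.Gamma (2-α))) * hx
  have hbval : b = (2*π) ^ (1-α) / Real.Gamma (2-α) + Ks (1-α) / Real.Gamma (2-α) := by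
    rw [hb, mittagLeffler]
    rw [show (∑' k : ℕ, (-(4*π^2))^k / Real.Gamma (2*(k:ℝ) + (2-α)))
        = 1/Real.Gamma (2-α) + (2*π)^(α-1:ℝ) * Ks (1-α) / Real.Gamma (2-α) from tsum_B hα0 hα1]
    have hx : (2*π:ℝ)^((1:ℝ)-α) * (2*π)^(α-1:ℝ) = 1 := by
      rw [← Real.rpow_add (by positivity)]; norm_num
    linear_combination (Ks (1-α) / Real.Gamma (2-α)) * hx
  -- derivatives
  have hd1 : deriv (fun s => c * Real.cos s) = fun s => -(c * Real.sin s) := by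
    funext x; rw [deriv_const_mul_field]; simp
  have hd2 : deriv (deriv (fun s => c * Real.cos s)) = fun s => -(c * Real.cos s) := by
    rw [hd1]
    funext x
    rw [show (fun s => -(c * Real.sin s)) = fun s => (-c) * Real.sin s by funext s; ring]
    rw [deriv_const_mul_field]; simp
  have he1 : deriv (fun s => c * Real.sin s) = fun s => c * Real.cos s := by
    funext x; rw [deriv_const_mul_field]; simp
  have he2 : deriv (deriv (fun s => c * Real.sin s)) = fun s => -(c * Real.sin s) := by
    rw [he1]
    funext x; rw [deriv_const_mul_field]; simp
  -- integrals
  have hintc : ∀ t : ℝ, (∫ τ in (t - 2*π)..t, (t - τ) ^ (1-α) * (-(c * Real.cos τ)))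
      = -(c * Real.cos t * Jc (1-α)) - c * Real.sin t * Ks (1-α) := by
    intro t
    have e1 : (fun τ => (t - τ) ^ (1-α) * (-(c * Real.cos τ)))
        = fun τ => (fun s => s ^ (1-α) * (-(c * Real.cos (t - s)))) (t - τ) := by
      funext τ; simp only []; rw [show t - (t - τ) = τ by ring]
    rw [intervalIntegral.integral_congr (g := fun τ => (fun s => s ^ (1-α) * (-(c * Real.cos (t - s)))) (t - τ))
      (fun x _ => by simp only []; rw [show t - (t - x) = x by ring])]
    rw [intervalIntegral.integral_comp_sub_left (fun s => s ^ (1-α) * (-(c * Real.cos (t - s)))) t]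
    rw [show t - t = (0:ℝ) by ring, show t - (t - 2*π) = 2*π by ring]
    have e2 : ∀ s ∈ Set.uIcc (0:ℝ) (2*π), s ^ (1-α) * (-(c * Real.cos (t - s)))
        = (-(c * Real.cos t)) * (s ^ (1-α) * Real.cos s) + (-(c * Real.sin t)) * (s ^ (1-α) * Real.sin s) := by
      intro s _; rw [Real.cos_sub]; ring
    rw [intervalIntegral.integral_congr (g := fun s =>
      (-(c * Real.cos t)) * (s ^ (1-α) * Real.cos s) + (-(c * Real.sin t)) * (s ^ (1-α) * Real.sin s))
      (fun s hs => e2 s hs)]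
    rw [intervalIntegral.integral_add ((intable_cos hp1 0 (2*π)).const_mul _)
      ((intable_sin hp1 0 (2*π)).const_mul _),
      intervalIntegral.integral_const_mul, intervalIntegral.integral_const_mul]
    rw [← Jc, ← Ks]; ring
  have hints : ∀ t : ℝ, (∫ τ in (t - 2*π)..t, (t - τ) ^ (1-α) * (-(c * Real.sin τ)))
      = -(c * Real.sin t * Jc (1-α)) + c * Real.cos t * Ks (1-α) := by
    intro t
    have e1 : (fun τ => (t - τ) ^ (1-α) * (-(c * Real.sin τ)))
        = fun τ => (fun s => s ^ (1-α) * (-(c * Real.sin (t - s)))) (t - τ) := by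
      funext τ; simp only []; rw [show t - (t - τ) = τ by ring]
    rw [intervalIntegral.integral_congr (g := fun τ => (fun s => s ^ (1-α) * (-(c * Real.sin (t - s)))) (t - τ))
      (fun x _ => by simp only []; rw [show t - (t - x) = x by ring])]
    rw [intervalIntegral.integral_comp_sub_left (fun s => s ^ (1-α) * (-(c * Real.sin (t - s)))) t]
    rw [show t - t = (0:ℝ) by ring, show t - (t - 2*π) = 2*π by ring]
    have e2 : ∀ s ∈ Set.uIcc (0:ℝ) (2*π), s ^ (1-α) * (-(c * Real.sin (t - s)))
        = (-(c * Real.sin t)) * (s ^ (1-α) * Real.cos s) + (c * Real.cos t) * (s ^ (1-α) * Real.sin s) := by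
      intro s _; rw [Real.sin_sub]; ring
    rw [intervalIntegral.integral_congr (g := fun s =>
      (-(c * Real.sin t)) * (s ^ (1-α) * Real.cos s) + (c * Real.cos t) * (s ^ (1-α) * Real.sin s))
      (fun s hs => e2 s hs)]
    rw [intervalIntegral.integral_add ((intable_cos hp1 0 (2*π)).const_mul _)
      ((intable_sin hp1 0 (2*π)).const_mul _),
      intervalIntegral.integral_const_mul, intervalIntegral.integral_const_mul]
    rw [← Jc, ← Ks]; ring
  refine ⟨?_, ?_, ?_, ?_⟩
  · intro t
    rw [Dfml, hd2, hd1]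
    simp only []
    rw [Real.cos_sub_two_pi, Real.sin_sub_two_pi, hintc t]
    rw [hX t, hA]
    simp [Matrix.mulVec, dotProduct, Fin.sum_univ_two]
    rw [haval, hbval]
    ring
  · intro t
    rw [Dfml, he2, he1]
    simp only []
    rw [Real.cos_sub_two_pi, Real.sin_sub_two_pi, hints t]
    rw [hX t, hA]
    simp [Matrix.mulVec, dotProduct, Fin.sum_univ_two]
    rw [haval, hbval]
    ring
  · intro t
    rw [hX (t + 2*π), hX t]
    funext i
    simp [Real.cos_add_two_pi, Real.sin_add_two_pi]
  · intro hc hconst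
    have h := congrFun (hconst 0 π) 0
    rw [hX 0, hX π] at h
    simp [Real.cos_pi] at h
    exact hc (by linarith)
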